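/- Let γ ∈ [0, 1/2), α ∈ (1/2, 1], M ≥ 0, C_g ≥ 0, C* ≥ 0, and let g : [0,1] → ℝ satisfy |g(s)| ≤ M and |g(s₁) − g(s₂)| ≤ C_g |s₁ − s₂|^α for all s, s₁, s₂ ∈ [0,1]. Let λ_{0,0} ∈ ℝ with |λ_{0,0}| ≤ C*, and let (λ_{j,k})_{j∈ℕ, 0 ≤ k ≤ 2^j−1} be real numbers with |λ_{j,k}| ≤ C* √(1 + j) for all j, k. For J ∈ ℕ and t ∈ [0,1], define S_J(t) = λ_{0,0} ∫₀^t g(s) φ_{0,0}(s) ds + Σ_{j=0}^{J} Σ_{k=0}^{2^j − 1} λ_{j,k} ∫₀^t g(s) ψ_{j,k}(s) ds. Then there exists a constant D > 0, depending only on M, C_g, C*, γ and α, such that for all J ∈ ℕ and all Q ∈ ℕ, Q ≥ 1, one has ‖S_{J+Q} − S_J‖_{C^γ([0,1])} ≤ D · 2^{−J min(1/2 − γ, α − 1/2)} √(1 + J). -/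

import Mathlib

open MeasureTheory Set
open Filter Topology

/-- The Haar scaling function `φ_{J,l} = 2^{J/2} 𝟙_{[l/2^J,(l+1)/2^J)}`. -/
noncomputable def haarPhi (J l : ℕ) (s : ℝ) : ℝ :=
  2 ^ ((J : ℝ) / 2) *
    (Set.Ico ((l : ℝ) / 2 ^ J) (((l : ℝ) + 1) / 2 ^ J)).indicator 1 s

/-- The Haar wavelet `ψ_{j,k} = 2^{j/2} (𝟙_{[k/2^j,(2k+1)/2^{j+1})} − 𝟙_{[(2k+1)/2^{j+1},(k+1)/2^j)})`. -/
noncomputable def haarPsi (j k : ℕ) (s : ℝ) : ℝ :=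
  2 ^ ((j : ℝ) / 2) *
    ((Set.Ico ((k : ℝ) / 2 ^ j) ((2 * (k : ℝ) + 1) / 2 ^ (j + 1))).indicator 1 s -
      (Set.Ico ((2 * (k : ℝ) + 1) / 2 ^ (j + 1)) (((k : ℝ) + 1) / 2 ^ j)).indicator 1 s)

/-- The partial sum `S_J(t) = λ_{0,0} ∫₀^t g φ_{0,0} + Σ_{j=0}^{J} Σ_{k=0}^{2^j−1} λ_{j,k} ∫₀^t g ψ_{j,k}`. -/
noncomputable def haarPartialSum (g : ℝ → ℝ) (lam00 : ℝ) (lam : ℕ → ℕ → ℝ)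
    (J : ℕ) (t : ℝ) : ℝ :=
  lam00 * (∫ s in (0 : ℝ)..t, g s * haarPhi 0 0 s) +
    ∑ j ∈ Finset.range (J + 1), ∑ k ∈ Finset.range (2 ^ j),
      lam j k * ∫ s in (0 : ℝ)..t, g s * haarPsi j k s

/-- The Hölder norm `‖u‖_{C^γ([0,1])} = sup_{[0,1]} |u| + sup_{0 ≤ t₁ < t₂ ≤ 1} |u(t₁) − u(t₂)|/(t₂ − t₁)^γ`. -/
noncomputable def holderNorm (γ : ℝ) (u : ℝ → ℝ) : ℝ :=
  sSup ((fun t => |u t|) '' Set.Icc (0 : ℝ) 1) +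
    sSup {q : ℝ | ∃ t₁ t₂ : ℝ, 0 ≤ t₁ ∧ t₁ < t₂ ∧ t₂ ≤ 1 ∧
      q = |u t₁ - u t₂| / (t₂ - t₁) ^ γ}

set_option maxHeartbeats 2000000

section haarAux
variable {g : ℝ → ℝ} {M Cg Cstar α γ : ℝ}

lemma mid_ge (j k : ℕ) : (k : ℝ) / 2 ^ j ≤ (2 * (k : ℝ) + 1) / 2 ^ (j + 1) := by
  rw [pow_succ, div_le_div_iff₀ (by positivity) (by positivity)]
  have : (0:ℝ) ≤ (2:ℝ)^j := by positivity
  nlinarith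

lemma mid_le (j k : ℕ) : (2 * (k : ℝ) + 1) / 2 ^ (j + 1) ≤ ((k : ℝ) + 1) / 2 ^ j := by
  rw [pow_succ, div_le_div_iff₀ (by positivity) (by positivity)]
  have : (0:ℝ) ≤ (2:ℝ)^j := by positivity
  nlinarith

lemma haarPsi_eq_zero_left {j k : ℕ} {s : ℝ} (h : s < (k:ℝ)/2^j) : haarPsi j k s = 0 := by
  unfold haarPsi
  rw [Set.indicator_of_notMem, Set.indicator_of_notMem]
  · ring
  · rintro ⟨h1, _⟩; exact absurd (le_trans (mid_ge j k) h1) (not_le.2 h)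
  · rintro ⟨h1, _⟩; exact absurd h1 (not_le.2 h)

lemma haarPsi_eq_zero_right {j k : ℕ} {s : ℝ} (h : ((k:ℝ)+1)/2^j ≤ s) : haarPsi j k s = 0 := by
  unfold haarPsi
  rw [Set.indicator_of_notMem, Set.indicator_of_notMem]
  · ring
  · rintro ⟨_, h2⟩; exact absurd (lt_of_lt_of_le h2 h) (lt_irrefl s)
  · rintro ⟨_, h2⟩; exact absurd (lt_of_lt_of_le h2 (le_trans (mid_le j k) h)) (lt_irrefl s)

lemma haarPsi_abs_le (j k : ℕ) (s : ℝ) : |haarPsi j k s| ≤ 2 ^ ((j:ℝ)/2) := by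
  unfold haarPsi
  rw [abs_mul, abs_of_pos (Real.rpow_pos_of_pos two_pos _)]
  have h1 : ∀ (S : Set ℝ), S.indicator (1 : ℝ → ℝ) s = 0 ∨ S.indicator (1 : ℝ → ℝ) s = 1 := by
    intro S; by_cases h : s ∈ S
    · right; simp [h]
    · left; simp [h]
    -- indicator_of_mem
  rcases h1 (Set.Ico ((k : ℝ) / 2 ^ j) ((2 * (k : ℝ) + 1) / 2 ^ (j + 1))) with hA | hA <;>
    rcases h1 (Set.Ico ((2 * (k : ℝ) + 1) / 2 ^ (j + 1)) (((k : ℝ) + 1) / 2 ^ j)) with hB | hB <;>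
    rw [hA, hB] <;> norm_num <;>
    positivity

lemma haarPsi_measurable (j k : ℕ) : Measurable (haarPsi j k) := by
  unfold haarPsi
  exact (((measurable_one.indicator measurableSet_Ico).sub
    (measurable_one.indicator measurableSet_Ico)).const_mul _)

lemma holder_continuousOn {g : ℝ → ℝ} {Cg α : ℝ} (hα : 0 < α)
    (hg : ∀ s₁ ∈ Set.Icc (0 : ℝ) 1, ∀ s₂ ∈ Set.Icc (0 : ℝ) 1,
      |g s₁ - g s₂| ≤ Cg * |s₁ - s₂| ^ α) :
    ContinuousOn g (Icc 0 1) := by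
  intro a ha
  rw [ContinuousWithinAt, tendsto_iff_dist_tendsto_zero]
  have hbound : Tendsto (fun s => Cg * |s - a| ^ α) (nhdsWithin a (Icc 0 1)) (nhds 0) := by
    have h1 : Tendsto (fun s : ℝ => |s - a|) (nhdsWithin a (Icc 0 1)) (nhds 0) := by
      have hc : Continuous (fun s : ℝ => |s - a|) :=
        (continuous_id.sub continuous_const).abs
      have h0 := hc.tendsto a
      simp only [sub_self, abs_zero] at h0
      exact h0.mono_left nhdsWithin_le_nhds
    have h2 : Tendsto (fun x : ℝ => Cg * x ^ α) (nhds 0) (nhds 0) := by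
      have hc : ContinuousAt (fun x : ℝ => x ^ α) 0 :=
        Real.continuousAt_rpow_const 0 α (Or.inr (le_of_lt hα))
      have := (hc.const_smul Cg).tendsto
      simp only [Pi.smul_def, Real.zero_rpow (ne_of_gt hα), smul_eq_mul, mul_zero] at this
      exact this
    exact h2.comp h1
  apply squeeze_zero' (Filter.Eventually.of_forall fun s => dist_nonneg) _ hbound
  filter_upwards [eventually_mem_nhdsWithin] with s hs
  rw [Real.dist_eq]
  exact hg s hs a ha

lemma gpsi_integrableOn {g : ℝ → ℝ} {M : ℝ} (hcont : ContinuousOn g (Icc 0 1))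
    (hgb : ∀ s ∈ Set.Icc (0 : ℝ) 1, |g s| ≤ M) (j k : ℕ)
    {s : Set ℝ} (hs : MeasurableSet s) (hsub : s ⊆ Icc 0 1) :
    IntegrableOn (fun u => g u * haarPsi j k u) s volume := by
  haveI : IsFiniteMeasure (volume.restrict s) := by
    constructor
    rw [Measure.restrict_apply_univ]
    exact lt_of_le_of_lt (measure_mono hsub) (by simp [Real.volume_Icc])
  constructor
  · have hg' : AEStronglyMeasurable g (volume.restrict (Icc (0:ℝ) 1)) :=
      hcont.aestronglyMeasurable measurableSet_Icc
    have hg'' : AEStronglyMeasurable g (volume.restrict s) :=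
      hg'.mono_measure (Measure.restrict_mono hsub le_rfl)
    exact hg''.mul (haarPsi_measurable j k).aestronglyMeasurable
  · apply HasFiniteIntegral.of_bounded (C := M * 2 ^ ((j:ℝ)/2))
    rw [ae_restrict_iff' hs]
    apply Filter.Eventually.of_forall
    intro u hu
    rw [Real.norm_eq_abs, abs_mul]
    exact mul_le_mul (hgb u (hsub hu)) (haarPsi_abs_le j k u) (abs_nonneg _)
      (le_trans (abs_nonneg _) (hgb u (hsub hu)))

lemma gpsi_intervalIntegrable {g : ℝ → ℝ} {M : ℝ} (hcont : ContinuousOn g (Icc 0 1))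
    (hgb : ∀ s ∈ Set.Icc (0 : ℝ) 1, |g s| ≤ M) (j k : ℕ)
    {a b : ℝ} (ha : a ∈ Icc (0:ℝ) 1) (hb : b ∈ Icc (0:ℝ) 1) :
    IntervalIntegrable (fun s => g s * haarPsi j k s) volume a b := by
  rw [intervalIntegrable_iff]
  apply gpsi_integrableOn hcont hgb j k measurableSet_uIoc
  exact fun x hx => Icc_subset_Icc (le_min ha.1 hb.1) (max_le ha.2 hb.2)
    (Ioc_subset_Icc_self hx)

lemma psi_on_A {j k : ℕ} {s : ℝ} (h1 : (k:ℝ)/2^j ≤ s) (h2 : s < (2*(k:ℝ)+1)/2^(j+1)) :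
    haarPsi j k s = 2 ^ ((j:ℝ)/2) := by
  unfold haarPsi
  rw [Set.indicator_of_mem (Set.mem_Ico.2 ⟨h1, h2⟩),
    Set.indicator_of_notMem
      (fun hmem => absurd (lt_of_le_of_lt (Set.mem_Ico.1 hmem).1 h2) (lt_irrefl _))]
  simp

lemma psi_on_B {j k : ℕ} {s : ℝ} (h1 : (2*(k:ℝ)+1)/2^(j+1) ≤ s) (h2 : s < ((k:ℝ)+1)/2^j) :
    haarPsi j k s = -(2 ^ ((j:ℝ)/2)) := by
  unfold haarPsi
  rw [Set.indicator_of_notMem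
      (fun hmem => absurd (lt_of_lt_of_le (Set.mem_Ico.1 hmem).2 h1) (lt_irrefl _)),
    Set.indicator_of_mem (Set.mem_Ico.2 ⟨h1, h2⟩)]
  simp

lemma bound_generic (hgb : ∀ s ∈ Set.Icc (0 : ℝ) 1, |g s| ≤ M) (j k : ℕ) {t₁ t₂ : ℝ} (h1 : t₁ ∈ Icc (0:ℝ) 1) (h2 : t₂ ∈ Icc (0:ℝ) 1)
    (hle : t₁ ≤ t₂) :
    |∫ s in t₁..t₂, g s * haarPsi j k s| ≤ M * 2 ^ ((j:ℝ)/2) * (t₂ - t₁) := by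
  have := intervalIntegral.norm_integral_le_of_norm_le_const
    (C := M * 2 ^ ((j:ℝ)/2)) (f := fun s => g s * haarPsi j k s) (a := t₁) (b := t₂) ?_
  · rw [Real.norm_eq_abs] at this
    rw [abs_of_nonneg (by linarith : (0:ℝ) ≤ t₂ - t₁)] at this
    exact this
  · intro x hx
    have hmem : x ∈ Icc (0:ℝ) 1 := by
      rw [uIoc_of_le hle] at hx
      exact ⟨le_trans h1.1 (le_of_lt hx.1), le_trans hx.2 h2.2⟩
    rw [Real.norm_eq_abs, abs_mul]
    exact mul_le_mul (hgb x hmem) (haarPsi_abs_le j k x) (abs_nonneg _)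
      (le_trans (abs_nonneg _) (hgb x hmem))

lemma integral_zero_right (j k : ℕ) {t₁ t₂ : ℝ} (hle : t₁ ≤ t₂)
    (h : t₂ ≤ (k:ℝ)/2^j) :
    (∫ s in t₁..t₂, g s * haarPsi j k s) = 0 := by
  rw [intervalIntegral.integral_of_le hle]
  rw [show (0:ℝ) = ∫ s in Ioc t₁ t₂, (0:ℝ) ∂volume by simp]
  apply setIntegral_congr_ae measurableSet_Ioc
  have hae : ∀ᵐ x : ℝ ∂volume, x ≠ (k:ℝ)/2^j := by
    rw [ae_iff]
    simp only [ne_eq, not_not]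
    have : {x : ℝ | x = (k:ℝ)/2^j} = {(k:ℝ)/2^j} := by ext; simp
    rw [this]
    exact measure_singleton _
  filter_upwards [hae] with x hx hmem
  show g x * haarPsi j k x = 0
  rw [haarPsi_eq_zero_left (lt_of_le_of_ne (le_trans hmem.2 h) hx), mul_zero]

lemma integral_zero_left (j k : ℕ) {t₁ t₂ : ℝ} (hle : t₁ ≤ t₂)
    (h : ((k:ℝ)+1)/2^j ≤ t₁) :
    (∫ s in t₁..t₂, g s * haarPsi j k s) = 0 := by
  rw [intervalIntegral.integral_of_le hle]
  rw [show (0:ℝ) = ∫ s in Ioc t₁ t₂, (0:ℝ) ∂volume by simp]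
  apply setIntegral_congr_fun measurableSet_Ioc
  intro x hx
  show g x * haarPsi j k x = 0
  rw [haarPsi_eq_zero_right (le_trans h (le_of_lt hx.1)), mul_zero]

lemma ae_ne_vol (c : ℝ) : ∀ᵐ x : ℝ ∂(volume : Measure ℝ), x ≠ c := by
  rw [ae_iff]
  simp only [ne_eq, not_not]
  have : {x : ℝ | x = c} = {c} := by ext; simp
  rw [this]
  exact measure_singleton _

lemma bound_support (hcont : ContinuousOn g (Icc 0 1))
    (hgb : ∀ s ∈ Set.Icc (0 : ℝ) 1, |g s| ≤ M) (hM : 0 ≤ M) (j k : ℕ)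
    {t₁ t₂ : ℝ} (h1 : t₁ ∈ Icc (0:ℝ) 1) (h2 : t₂ ∈ Icc (0:ℝ) 1) (hle : t₁ ≤ t₂) :
    |∫ s in t₁..t₂, g s * haarPsi j k s| ≤ M * 2 ^ ((j:ℝ)/2) * ((2:ℝ)^j)⁻¹ := by
  set l := (k:ℝ)/2^j with hldef
  set r := ((k:ℝ)+1)/2^j with hrdef
  set c := M * 2 ^ ((j:ℝ)/2) with hcdef
  have hc0 : 0 ≤ c := by positivity
  have hind : Integrable ((Ico l r).indicator (fun _ => c)) volume := by
    rw [integrable_indicator_iff measurableSet_Ico]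
    exact integrableOn_const (by rw [Real.volume_Ico]; exact ENNReal.ofReal_ne_top)
  calc |∫ s in t₁..t₂, g s * haarPsi j k s|
      ≤ ∫ s in t₁..t₂, |g s * haarPsi j k s| :=
        intervalIntegral.abs_integral_le_integral_abs hle
    _ ≤ ∫ s in t₁..t₂, (Ico l r).indicator (fun _ => c) s := by
        apply intervalIntegral.integral_mono_on hle
        · exact (gpsi_intervalIntegrable hcont hgb j k h1 h2).abs
        · exact hind.intervalIntegrable
        · intro x hx
          by_cases hmem : x ∈ Ico l r
          · rw [indicator_of_mem hmem, abs_mul]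
            have hx01 : x ∈ Icc (0:ℝ) 1 := ⟨le_trans h1.1 hx.1, le_trans hx.2 h2.2⟩
            exact mul_le_mul (hgb x hx01) (haarPsi_abs_le j k x) (abs_nonneg _)
              (le_trans (abs_nonneg _) (hgb x hx01))
          · rw [indicator_of_notMem hmem]
            have : haarPsi j k x = 0 := by
              rcases not_and_or.1 hmem with h | h
              · exact haarPsi_eq_zero_left (not_le.1 h)
              · exact haarPsi_eq_zero_right (not_lt.1 h)
            rw [this, mul_zero, abs_zero]
    _ ≤ M * 2 ^ ((j:ℝ)/2) * ((2:ℝ)^j)⁻¹ := by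
        rw [intervalIntegral.integral_of_le hle, setIntegral_indicator measurableSet_Ico,
          setIntegral_const, smul_eq_mul]
        have hmle : (volume (Ioc t₁ t₂ ∩ Ico l r)).toReal ≤ ((2:ℝ)^j)⁻¹ := by
          have h1' : volume (Ioc t₁ t₂ ∩ Ico l r) ≤ volume (Ico l r) :=
            measure_mono inter_subset_right
          have h2' : volume (Ico l r) = ENNReal.ofReal (((2:ℝ)^j)⁻¹) := by
            rw [Real.volume_Ico]
            congr 1
            rw [hrdef, hldef]
            field_simp
            ring
          calc (volume (Ioc t₁ t₂ ∩ Ico l r)).toReal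
              ≤ (volume (Ico l r)).toReal := by
                apply ENNReal.toReal_mono _ h1'
                rw [h2']; exact ENNReal.ofReal_ne_top
            _ = ((2:ℝ)^j)⁻¹ := by rw [h2', ENNReal.toReal_ofReal (by positivity)]
        calc (volume (Ioc t₁ t₂ ∩ Ico l r)).toReal * c ≤ ((2:ℝ)^j)⁻¹ * c :=
              mul_le_mul_of_nonneg_right hmle hc0
          _ = M * 2 ^ ((j:ℝ)/2) * ((2:ℝ)^j)⁻¹ := by rw [hcdef]; ring

lemma bound_cancel (hcont : ContinuousOn g (Icc 0 1))
    (hgb : ∀ s ∈ Set.Icc (0 : ℝ) 1, |g s| ≤ M)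
    (hg : ∀ s₁ ∈ Set.Icc (0 : ℝ) 1, ∀ s₂ ∈ Set.Icc (0 : ℝ) 1,
      |g s₁ - g s₂| ≤ Cg * |s₁ - s₂| ^ α)
    (hCg : 0 ≤ Cg) (j k : ℕ)
    {t₁ t₂ : ℝ} (h1 : t₁ ∈ Icc (0:ℝ) 1) (h2 : t₂ ∈ Icc (0:ℝ) 1)
    (hlt : t₁ ≤ (k:ℝ)/2^j) (hrt : ((k:ℝ)+1)/2^j ≤ t₂) :
    |∫ s in t₁..t₂, g s * haarPsi j k s| ≤
      Cg * 2 ^ ((j:ℝ)/2) * ((2:ℝ)^(j+1))⁻¹ * (((2:ℝ)^(j+1))⁻¹) ^ α := by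
  set l := (k:ℝ)/2^j with hldef
  set m := (2*(k:ℝ)+1)/2^(j+1) with hmdef
  set r := ((k:ℝ)+1)/2^j with hrdef
  set h := ((2:ℝ)^(j+1))⁻¹ with hhdef
  have hh0 : 0 < h := by positivity
  have hlm : l ≤ m := mid_ge j k
  have hmr : m ≤ r := mid_le j k
  have hl0 : 0 ≤ l := by positivity
  have hr1 : r ≤ 1 := le_trans hrt h2.2
  have hlmem : l ∈ Icc (0:ℝ) 1 := ⟨hl0, le_trans (le_trans hlm hmr) hr1⟩
  have hmmem : m ∈ Icc (0:ℝ) 1 := ⟨le_trans hl0 hlm, le_trans hmr hr1⟩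
  have hrmem : r ∈ Icc (0:ℝ) 1 := ⟨le_trans (le_trans hl0 hlm) hmr, hr1⟩
  have hlh : l + h = m := by rw [hldef, hmdef, hhdef]; field_simp; ring
  have hmh : m + h = r := by rw [hmdef, hrdef, hhdef]; field_simp; ring
  have hml : m - l = h := by linarith
  -- reduce to ∫ l..r
  have eq1 : (∫ s in t₁..t₂, g s * haarPsi j k s) = ∫ s in l..r, g s * haarPsi j k s := by
    have ha := intervalIntegral.integral_add_adjacent_intervals
      (gpsi_intervalIntegrable hcont hgb j k h1 hlmem)
      (gpsi_intervalIntegrable hcont hgb j k hlmem h2)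
    have hb := intervalIntegral.integral_add_adjacent_intervals
      (gpsi_intervalIntegrable hcont hgb j k hlmem hrmem)
      (gpsi_intervalIntegrable hcont hgb j k hrmem h2)
    have hz1 : (∫ s in t₁..l, g s * haarPsi j k s) = 0 :=
      integral_zero_right j k hlt le_rfl
    have hz2 : (∫ s in r..t₂, g s * haarPsi j k s) = 0 :=
      integral_zero_left j k hrt le_rfl
    rw [hz1, zero_add] at ha
    rw [hz2, add_zero] at hb
    rw [← ha, ← hb]
  -- on the two halves
  have eq2 : (∫ s in l..m, g s * haarPsi j k s) = 2 ^ ((j:ℝ)/2) * ∫ s in l..m, g s := by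
    rw [← intervalIntegral.integral_const_mul]
    apply intervalIntegral.integral_congr_ae
    filter_upwards [ae_ne_vol m] with x hx hmem
    rw [uIoc_of_le hlm] at hmem
    rw [psi_on_A (le_of_lt hmem.1) (lt_of_le_of_ne hmem.2 hx)]
    ring
  have eq3 : (∫ s in m..r, g s * haarPsi j k s) = -(2 ^ ((j:ℝ)/2)) * ∫ s in m..r, g s := by
    rw [← intervalIntegral.integral_const_mul]
    apply intervalIntegral.integral_congr_ae
    filter_upwards [ae_ne_vol r] with x hx hmem
    rw [uIoc_of_le hmr] at hmem
    rw [psi_on_B (le_of_lt hmem.1) (lt_of_le_of_ne hmem.2 hx)]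
    ring
  have eq4 : (∫ s in m..r, g s) = ∫ x in l..m, g (x + h) := by
    rw [intervalIntegral.integral_comp_add_right g h, hlh, hmh]
  -- integrability of g and its translate on [l,m]
  have hgint : IntervalIntegrable g volume l m := by
    apply ContinuousOn.intervalIntegrable
    apply hcont.mono
    rw [uIcc_of_le hlm]
    exact Icc_subset_Icc hlmem.1 hmmem.2
  have hgtint : IntervalIntegrable (fun x => g (x + h)) volume l m := by
    apply ContinuousOn.intervalIntegrable
    have : ContinuousOn (fun x : ℝ => x + h) (uIcc l m) :=
      (continuous_id.add continuous_const).continuousOn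
    apply hcont.comp this
    rw [uIcc_of_le hlm]
    intro x hx
    show x + h ∈ Icc (0:ℝ) 1
    constructor
    · linarith [hx.1, hl0, le_of_lt hh0]
    · have : x + h ≤ m + h := by linarith [hx.2]
      rw [hmh] at this
      linarith [hr1]
  have eq5 : (∫ s in t₁..t₂, g s * haarPsi j k s) =
      2 ^ ((j:ℝ)/2) * ∫ x in l..m, (g x - g (x + h)) := by
    rw [eq1, ← intervalIntegral.integral_add_adjacent_intervals
      (gpsi_intervalIntegrable hcont hgb j k hlmem hmmem)
      (gpsi_intervalIntegrable hcont hgb j k hmmem hrmem),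
      eq2, eq3, eq4, intervalIntegral.integral_sub hgint hgtint]
    ring
  rw [eq5, abs_mul, abs_of_pos (Real.rpow_pos_of_pos two_pos _)]
  have hbound : |∫ x in l..m, (g x - g (x + h))| ≤ (Cg * h ^ α) * h := by
    have := intervalIntegral.norm_integral_le_of_norm_le_const
      (C := Cg * h ^ α) (f := fun x => g x - g (x + h)) (a := l) (b := m) ?_
    · rw [Real.norm_eq_abs] at this
      rw [abs_of_nonneg (by linarith : (0:ℝ) ≤ m - l), hml] at this
      exact this
    · intro x hx
      rw [uIoc_of_le hlm] at hx
      have hx01 : x ∈ Icc (0:ℝ) 1 := ⟨le_trans hl0 (le_of_lt hx.1), le_trans hx.2 hmmem.2⟩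
      have hxh01 : x + h ∈ Icc (0:ℝ) 1 := by
        constructor
        · linarith [hx01.1, le_of_lt hh0]
        · have : x + h ≤ m + h := by linarith [hx.2]
          rw [hmh] at this
          linarith [hr1]
      have := hg x hx01 (x + h) hxh01
      rw [Real.norm_eq_abs]
      have habs : |x - (x + h)| = h := by
        rw [show x - (x + h) = -h by ring, abs_neg, abs_of_pos hh0]
      rw [habs] at this
      exact this
  calc 2 ^ ((j:ℝ)/2) * |∫ x in l..m, (g x - g (x + h))|
      ≤ 2 ^ ((j:ℝ)/2) * ((Cg * h ^ α) * h) :=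
        mul_le_mul_of_nonneg_left hbound (le_of_lt (Real.rpow_pos_of_pos two_pos _))
    _ = Cg * 2 ^ ((j:ℝ)/2) * h * h ^ α := by ring

lemma rpow_nat_inv (j : ℕ) : ((2:ℝ)^j)⁻¹ = (2:ℝ)^(-(j:ℝ)) := by
  rw [← Real.rpow_natCast 2 j, ← Real.rpow_neg (by norm_num)]

lemma level_sum_bound
    (hcont : ContinuousOn g (Icc 0 1))
    (hgb : ∀ s ∈ Set.Icc (0 : ℝ) 1, |g s| ≤ M)
    (hg : ∀ s₁ ∈ Set.Icc (0 : ℝ) 1, ∀ s₂ ∈ Set.Icc (0 : ℝ) 1,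
      |g s₁ - g s₂| ≤ Cg * |s₁ - s₂| ^ α)
    (hM : 0 ≤ M) (hCg : 0 ≤ Cg)
    (hγ0 : 0 ≤ γ) (hγ : γ < 1/2) (hα0 : 1/2 < α) (hα1 : α ≤ 1)
    (j : ℕ) {t₁ t₂ : ℝ} (ht1 : 0 ≤ t₁) (h12 : t₁ < t₂) (ht2 : t₂ ≤ 1) :
    ∑ k ∈ Finset.range (2^j), |∫ s in t₁..t₂, g s * haarPsi j k s| ≤
      (2*M + 3*Cg) * 2 ^ (-(j:ℝ) * min (1/2 - γ) (α - 1/2)) * (t₂ - t₁) ^ γ := by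
  set δ := min (1/2 - γ) (α - 1/2) with hδdef
  have hδ0 : 0 < δ := lt_min (by linarith) (by linarith)
  have hδγ : δ ≤ 1/2 - γ := min_le_left _ _
  have hδα : δ ≤ α - 1/2 := min_le_right _ _
  set Δ := t₂ - t₁ with hΔdef
  have hΔ0 : 0 < Δ := by simp only [hΔdef]; linarith
  have hΔ1 : Δ ≤ 1 := by simp only [hΔdef]; linarith
  have h1m : t₁ ∈ Icc (0:ℝ) 1 := ⟨ht1, by linarith⟩
  have h2m : t₂ ∈ Icc (0:ℝ) 1 := ⟨by linarith, ht2⟩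
  have h2j0 : (0:ℝ) < 2^j := by positivity
  have hj0 : (0:ℝ) ≤ (j:ℝ) := Nat.cast_nonneg j
  set P := (2:ℝ) ^ (-(j:ℝ) * δ) with hPdef
  have hP0 : 0 < P := Real.rpow_pos_of_pos two_pos _
  have hΔγ0 : 0 ≤ Δ^γ := Real.rpow_nonneg (le_of_lt hΔ0) γ
  set K₁ := ⌊(2:ℝ)^j * t₁⌋₊ with hK1def
  set K₂ := ⌊(2:ℝ)^j * t₂⌋₊ with hK2def
  have hK1le : (K₁:ℝ) ≤ 2^j * t₁ := Nat.floor_le (mul_nonneg (le_of_lt h2j0) ht1)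
  have hK1gt : (2:ℝ)^j * t₁ < K₁ + 1 := Nat.lt_floor_add_one _
  have hK2le : (K₂:ℝ) ≤ 2^j * t₂ := Nat.floor_le (mul_nonneg (le_of_lt h2j0) (by linarith))
  have hK2gt : (2:ℝ)^j * t₂ < K₂ + 1 := Nat.lt_floor_add_one _
  have hKK : K₁ ≤ K₂ := Nat.floor_mono (by nlinarith)
  have hstep1 : ∑ k ∈ Finset.range (2^j), |∫ s in t₁..t₂, g s * haarPsi j k s| ≤
      ∑ k ∈ Finset.Icc K₁ K₂, |∫ s in t₁..t₂, g s * haarPsi j k s| := by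
    have hre : ∑ k ∈ Finset.range (2^j) ∩ Finset.Icc K₁ K₂,
        |∫ s in t₁..t₂, g s * haarPsi j k s| =
        ∑ k ∈ Finset.range (2^j), |∫ s in t₁..t₂, g s * haarPsi j k s| := by
      apply Finset.sum_subset Finset.inter_subset_left
      intro k hk hnk
      have hk2 : k ∉ Finset.Icc K₁ K₂ := fun h => hnk (Finset.mem_inter.2 ⟨hk, h⟩)
      rw [Finset.mem_Icc, not_and_or] at hk2
      rcases hk2 with h | h
      · have hk1 : k + 1 ≤ K₁ := Nat.succ_le_of_lt (not_le.1 h)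
        have hc : ((k:ℝ)+1) ≤ K₁ := by exact_mod_cast hk1
        have hfin : ((k:ℝ)+1)/2^j ≤ t₁ := by
          rw [div_le_iff₀ h2j0]; nlinarith
        rw [integral_zero_left j k (le_of_lt h12) hfin, abs_zero]
      · have hk2' : K₂ < k := not_le.1 h
        have hc : (K₂:ℝ)+1 ≤ k := by exact_mod_cast hk2'
        have hfin : t₂ ≤ (k:ℝ)/2^j := by
          rw [le_div_iff₀ h2j0]; nlinarith
        rw [integral_zero_right j k (le_of_lt h12) hfin, abs_zero]
    rw [← hre]
    exact Finset.sum_le_sum_of_subset_of_nonneg Finset.inter_subset_right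
      (fun k _ _ => abs_nonneg _)
  have hrpow_half : (2:ℝ)^((j:ℝ)/2) = (2:ℝ)^((j:ℝ)*(1/2)) := by ring_nf
  by_cases hsmall : (2:ℝ)^j * Δ ≤ 1
  · -- small case
    have hcard : (Finset.Icc K₁ K₂).card ≤ 2 := by
      rw [Nat.card_Icc]
      have hK2K1 : K₂ < K₁ + 2 := by
        have hcast : (K₂:ℝ) < (K₁:ℝ) + 2 := by nlinarith
        exact_mod_cast hcast
      omega
    have hb0 : 0 ≤ M * 2^((j:ℝ)/2) * Δ :=
      mul_nonneg (mul_nonneg hM (Real.rpow_nonneg (by norm_num) _)) (le_of_lt hΔ0)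
    have hsum : ∑ k ∈ Finset.Icc K₁ K₂, |∫ s in t₁..t₂, g s * haarPsi j k s| ≤
        2 * (M * 2^((j:ℝ)/2) * Δ) := by
      calc ∑ k ∈ Finset.Icc K₁ K₂, |∫ s in t₁..t₂, g s * haarPsi j k s|
          ≤ (Finset.Icc K₁ K₂).card • (M * 2^((j:ℝ)/2) * Δ) :=
            Finset.sum_le_card_nsmul _ _ _
              (fun k _ => bound_generic hgb j k h1m h2m (le_of_lt h12))
        _ = ((Finset.Icc K₁ K₂).card : ℝ) * (M * 2^((j:ℝ)/2) * Δ) := nsmul_eq_mul _ _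
        _ ≤ 2 * (M * 2^((j:ℝ)/2) * Δ) := by
            apply mul_le_mul_of_nonneg_right _ hb0
            exact_mod_cast hcard
    have key : (2:ℝ)^((j:ℝ)/2) * Δ ≤ P * Δ^γ := by
      have e1 : Δ ≤ (2:ℝ)^(-(j:ℝ)) := by
        have h' : Δ ≤ ((2:ℝ)^j)⁻¹ := by
          rw [inv_eq_one_div, le_div_iff₀ h2j0]; linarith
        rwa [rpow_nat_inv j] at h'
      have e2 : Δ^(1-γ) * Δ^γ = Δ := by
        rw [← Real.rpow_add hΔ0]; norm_num
      have e3 : Δ^(1-γ) ≤ ((2:ℝ)^(-(j:ℝ)))^(1-γ) :=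
        Real.rpow_le_rpow (le_of_lt hΔ0) e1 (by linarith)
      have e4 : ((2:ℝ)^(-(j:ℝ)))^(1-γ) = (2:ℝ)^(-(j:ℝ)*(1-γ)) := by
        rw [← Real.rpow_mul (by norm_num)]
      have e6 : (2:ℝ)^((j:ℝ)/2) * (2:ℝ)^(-(j:ℝ)*(1-γ)) ≤ P := by
        rw [← Real.rpow_add two_pos, hPdef]
        apply Real.rpow_le_rpow_of_exponent_le (by norm_num)
        nlinarith
      calc (2:ℝ)^((j:ℝ)/2) * Δ = (2:ℝ)^((j:ℝ)/2) * (Δ^(1-γ) * Δ^γ) := by rw [e2]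
        _ ≤ (2:ℝ)^((j:ℝ)/2) * ((2:ℝ)^(-(j:ℝ)*(1-γ)) * Δ^γ) := by
            apply mul_le_mul_of_nonneg_left _ (Real.rpow_nonneg (by norm_num) _)
            exact mul_le_mul_of_nonneg_right (e4 ▸ e3) hΔγ0
        _ = ((2:ℝ)^((j:ℝ)/2) * (2:ℝ)^(-(j:ℝ)*(1-γ))) * Δ^γ := by ring
        _ ≤ P * Δ^γ := mul_le_mul_of_nonneg_right e6 hΔγ0
    calc ∑ k ∈ Finset.range (2^j), |∫ s in t₁..t₂, g s * haarPsi j k s|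
        ≤ ∑ k ∈ Finset.Icc K₁ K₂, |∫ s in t₁..t₂, g s * haarPsi j k s| := hstep1
      _ ≤ 2 * (M * 2^((j:ℝ)/2) * Δ) := hsum
      _ = 2 * M * ((2:ℝ)^((j:ℝ)/2) * Δ) := by ring
      _ ≤ 2 * M * (P * Δ^γ) := mul_le_mul_of_nonneg_left key (by linarith)
      _ ≤ (2*M + 3*Cg) * P * Δ^γ := by nlinarith [mul_nonneg (le_of_lt hP0) hΔγ0]
  · -- large case
    push_neg at hsmall
    have hΔinv : (2:ℝ)^(-(j:ℝ)) ≤ Δ := by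
      have h' : ((2:ℝ)^j)⁻¹ ≤ Δ := by
        rw [inv_eq_one_div, div_le_iff₀ h2j0]; nlinarith
      rwa [rpow_nat_inv j] at h'
    set e := M * 2^((j:ℝ)/2) * ((2:ℝ)^j)⁻¹ with hedef
    set cc := Cg * 2 ^ ((j:ℝ)/2) * ((2:ℝ)^(j+1))⁻¹ * (((2:ℝ)^(j+1))⁻¹) ^ α with hccdef
    have he0 : 0 ≤ e := mul_nonneg (mul_nonneg hM (Real.rpow_nonneg (by norm_num) _)) (by positivity)
    have hcc0 : 0 ≤ cc := by
      apply mul_nonneg (mul_nonneg (mul_nonneg hCg (Real.rpow_nonneg (by norm_num) _)) (by positivity))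
      exact Real.rpow_nonneg (by positivity) _
    have hper : ∀ k ∈ Finset.Icc K₁ K₂, |∫ s in t₁..t₂, g s * haarPsi j k s| ≤
        (if k = K₁ then e else 0) + (if k = K₂ then e else 0) + cc := by
      intro k hk
      rw [Finset.mem_Icc] at hk
      by_cases hk1 : k = K₁
      · have hbs := bound_support hcont hgb hM j k h1m h2m (le_of_lt h12)
        rw [if_pos hk1]
        have h2nd : (0:ℝ) ≤ (if k = K₂ then e else 0) := by split <;> simp [he0]
        rw [hedef] at *
        linarith
      · by_cases hk2 : k = K₂
        · have hbs := bound_support hcont hgb hM j k h1m h2m (le_of_lt h12)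
          rw [if_neg hk1, if_pos hk2]
          rw [hedef] at *
          linarith
        · have hlo : K₁ < k := lt_of_le_of_ne hk.1 (Ne.symm hk1)
          have hhi : k < K₂ := lt_of_le_of_ne hk.2 hk2
          have hc1 : ((K₁:ℝ))+1 ≤ k := by exact_mod_cast hlo
          have hc2 : ((k:ℝ))+1 ≤ K₂ := by exact_mod_cast hhi
          have hlt : t₁ ≤ (k:ℝ)/2^j := by
            rw [le_div_iff₀ h2j0]; nlinarith
          have hrt : ((k:ℝ)+1)/2^j ≤ t₂ := by
            rw [div_le_iff₀ h2j0]; nlinarith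
          have := bound_cancel hcont hgb hg hCg j k h1m h2m hlt hrt
          rw [if_neg hk1, if_neg hk2]
          linarith
    have hcard : ((Finset.Icc K₁ K₂).card : ℝ) ≤ 3 * ((2:ℝ)^j * Δ) := by
      rw [Nat.card_Icc]
      have : ((K₂ + 1 - K₁ : ℕ) : ℝ) = (K₂:ℝ) + 1 - K₁ := by
        rw [Nat.cast_sub (by omega)]; push_cast; ring
      rw [this]
      nlinarith
    have hsum2 : ∑ k ∈ Finset.Icc K₁ K₂, |∫ s in t₁..t₂, g s * haarPsi j k s| ≤
        2 * e + 3 * ((2:ℝ)^j * Δ) * cc := by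
      calc ∑ k ∈ Finset.Icc K₁ K₂, |∫ s in t₁..t₂, g s * haarPsi j k s|
          ≤ ∑ k ∈ Finset.Icc K₁ K₂, ((if k = K₁ then e else 0) + (if k = K₂ then e else 0) + cc) :=
            Finset.sum_le_sum hper
        _ = (∑ k ∈ Finset.Icc K₁ K₂, if k = K₁ then e else 0) +
            (∑ k ∈ Finset.Icc K₁ K₂, if k = K₂ then e else 0) +
            (Finset.Icc K₁ K₂).card * cc := by
            rw [Finset.sum_add_distrib, Finset.sum_add_distrib]
            simp [Finset.sum_const, nsmul_eq_mul]
        _ ≤ e + e + 3 * ((2:ℝ)^j * Δ) * cc := by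
            gcongr ?_ + ?_ + ?_
            · rw [Finset.sum_ite_eq' (Finset.Icc K₁ K₂) K₁ (fun _ => e)]
              split <;> simp [he0]
            · rw [Finset.sum_ite_eq' (Finset.Icc K₁ K₂) K₂ (fun _ => e)]
              split <;> simp [he0]
            · exact mul_le_mul_of_nonneg_right hcard hcc0
        _ = 2 * e + 3 * ((2:ℝ)^j * Δ) * cc := by ring
    -- numeric bounds
    have hbA : e ≤ M * (P * Δ^γ) := by
      have h1' : (2:ℝ)^((j:ℝ)/2) * ((2:ℝ)^j)⁻¹ = (2:ℝ)^((j:ℝ)/2 + -(j:ℝ)) := by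
        rw [rpow_nat_inv j, ← Real.rpow_add two_pos]
      have h2' : (2:ℝ)^(-(j:ℝ)*γ) ≤ Δ^γ := by
        have := Real.rpow_le_rpow (Real.rpow_nonneg (by norm_num) _) hΔinv hγ0
        rwa [← Real.rpow_mul (by norm_num)] at this
      have h3' : (2:ℝ)^((j:ℝ)/2 + -(j:ℝ)) ≤ P * (2:ℝ)^(-(j:ℝ)*γ) := by
        rw [hPdef, ← Real.rpow_add two_pos]
        apply Real.rpow_le_rpow_of_exponent_le (by norm_num)
        nlinarith
      calc e = M * ((2:ℝ)^((j:ℝ)/2) * ((2:ℝ)^j)⁻¹) := by rw [hedef]; ring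
        _ = M * (2:ℝ)^((j:ℝ)/2 + -(j:ℝ)) := by rw [h1']
        _ ≤ M * (P * (2:ℝ)^(-(j:ℝ)*γ)) := mul_le_mul_of_nonneg_left h3' hM
        _ ≤ M * (P * Δ^γ) := by
            apply mul_le_mul_of_nonneg_left _ hM
            exact mul_le_mul_of_nonneg_left h2' (le_of_lt hP0)
    have hbB : (2:ℝ)^j * Δ * cc ≤ Cg * (P * Δ^γ) := by
      have hinv : ((2:ℝ)^(j+1))⁻¹ ≤ ((2:ℝ)^j)⁻¹ := by
        apply inv_anti₀ h2j0
        rw [pow_succ]; nlinarith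
      have hinv0 : (0:ℝ) < ((2:ℝ)^(j+1))⁻¹ := by positivity
      have hrp : (((2:ℝ)^(j+1))⁻¹) ^ α ≤ (((2:ℝ)^j)⁻¹) ^ α :=
        Real.rpow_le_rpow (le_of_lt hinv0) hinv (by linarith)
      have hc1 : cc ≤ Cg * 2^((j:ℝ)/2) * ((2:ℝ)^j)⁻¹ * (((2:ℝ)^j)⁻¹) ^ α := by
        rw [hccdef]
        apply mul_le_mul
        · apply mul_le_mul_of_nonneg_left hinv
          exact mul_nonneg hCg (Real.rpow_nonneg (by norm_num) _)
        · exact hrp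
        · exact Real.rpow_nonneg (le_of_lt hinv0) _
        · positivity
      have hpow1 : (((2:ℝ)^j)⁻¹) ^ α = (2:ℝ)^(-(j:ℝ)*α) := by
        rw [rpow_nat_inv j, ← Real.rpow_mul (by norm_num)]
      have hΔγ : Δ ≤ Δ^γ := by
        have := Real.rpow_le_rpow_of_exponent_ge hΔ0 hΔ1 (by linarith : γ ≤ (1:ℝ))
        rwa [Real.rpow_one] at this
      have hpow2 : (2:ℝ)^((j:ℝ)/2) * (2:ℝ)^(-(j:ℝ)*α) ≤ P := by
        rw [hPdef, ← Real.rpow_add two_pos]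
        apply Real.rpow_le_rpow_of_exponent_le (by norm_num)
        nlinarith
      calc (2:ℝ)^j * Δ * cc
          ≤ (2:ℝ)^j * Δ * (Cg * 2^((j:ℝ)/2) * ((2:ℝ)^j)⁻¹ * (((2:ℝ)^j)⁻¹) ^ α) := by
            apply mul_le_mul_of_nonneg_left hc1
            positivity
        _ = Cg * (Δ * ((2:ℝ)^((j:ℝ)/2) * (2:ℝ)^(-(j:ℝ)*α))) := by
            rw [hpow1]
            field_simp
        _ ≤ Cg * (Δ^γ * P) := by
            apply mul_le_mul_of_nonneg_left _ hCg
            apply mul_le_mul hΔγ hpow2 _ hΔγ0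
            positivity
        _ = Cg * (P * Δ^γ) := by ring
    calc ∑ k ∈ Finset.range (2^j), |∫ s in t₁..t₂, g s * haarPsi j k s|
        ≤ ∑ k ∈ Finset.Icc K₁ K₂, |∫ s in t₁..t₂, g s * haarPsi j k s| := hstep1
      _ ≤ 2 * e + 3 * ((2:ℝ)^j * Δ) * cc := hsum2
      _ ≤ 2 * (M * (P * Δ^γ)) + 3 * (Cg * (P * Δ^γ)) := by nlinarith
      _ = (2*M + 3*Cg) * P * Δ^γ := by ring

end haarAux

noncomputable def tailK (δ : ℝ) : ℝ :=
  (1 - (2:ℝ)^(-δ))⁻¹ + (2:ℝ)^(-δ)/(1-(2:ℝ)^(-δ))^2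


section haarAux2
variable {g : ℝ → ℝ} {M Cg Cstar α γ : ℝ}

lemma tail_sum_bound {δ : ℝ} (hδ0 : 0 < δ) (J Q : ℕ) :
    ∑ j ∈ Finset.Ico (J+1) (J+Q+1), Real.sqrt (1 + (j:ℝ)) * (2:ℝ)^(-(j:ℝ)*δ) ≤
      ((1 - (2:ℝ)^(-δ))⁻¹ + (2:ℝ)^(-δ)/(1-(2:ℝ)^(-δ))^2) *
        (Real.sqrt (1 + (J:ℝ)) * (2:ℝ)^(-(J:ℝ)*δ)) := by
  set r := (2:ℝ)^(-δ) with hrdef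
  have hr0 : 0 < r := Real.rpow_pos_of_pos two_pos _
  have hr1 : r < 1 := Real.rpow_lt_one_of_one_lt_of_neg (by norm_num) (by linarith)
  have hsq0 : 0 ≤ Real.sqrt (1 + (J:ℝ)) := Real.sqrt_nonneg _
  have hp0 : 0 ≤ (2:ℝ)^(-(J:ℝ)*δ) := Real.rpow_nonneg (by norm_num) _
  have hgeo : HasSum (fun m : ℕ => r^m) (1-r)⁻¹ := hasSum_geometric_of_lt_one (le_of_lt hr0) hr1
  have hmgeo : HasSum (fun m : ℕ => (m:ℝ) * r^m) (r/(1-r)^2) := by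
    apply hasSum_coe_mul_geometric_of_norm_lt_one
    rw [Real.norm_eq_abs, abs_of_pos hr0]; exact hr1
  have hf : HasSum (fun m : ℕ => (1+(m:ℝ)) * r^m) ((1-r)⁻¹ + r/(1-r)^2) := by
    have := hgeo.add hmgeo
    convert this using 2 with m
    ring
  have hf0 : ∀ m : ℕ, 0 ≤ (1+(m:ℝ)) * r^m := fun m => by positivity
  have hterm : ∀ k : ℕ, Real.sqrt (1 + ((J+1+k : ℕ):ℝ)) * (2:ℝ)^(-((J+1+k:ℕ):ℝ)*δ) ≤
      Real.sqrt (1 + (J:ℝ)) * (2:ℝ)^(-(J:ℝ)*δ) * ((1+((k+1:ℕ):ℝ)) * r^(k+1)) := by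
    intro k
    have hc : ((J+1+k : ℕ):ℝ) = (J:ℝ) + 1 + k := by push_cast; ring
    have hsqb : Real.sqrt (1 + ((J+1+k:ℕ):ℝ)) ≤ Real.sqrt (1 + (J:ℝ)) * (2+(k:ℝ)) := by
      rw [hc]
      calc Real.sqrt (1 + ((J:ℝ)+1+k)) ≤ Real.sqrt ((1+(J:ℝ)) * (2+(k:ℝ))) := by
            apply Real.sqrt_le_sqrt
            have : (0:ℝ) ≤ (J:ℝ)*(k:ℝ) := by positivity
            nlinarith [(Nat.cast_nonneg J : (0:ℝ) ≤ J), (Nat.cast_nonneg k : (0:ℝ) ≤ k)]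
        _ = Real.sqrt (1+(J:ℝ)) * Real.sqrt (2+(k:ℝ)) := Real.sqrt_mul (by positivity) _
        _ ≤ Real.sqrt (1+(J:ℝ)) * (2+(k:ℝ)) := by
            apply mul_le_mul_of_nonneg_left _ hsq0
            rw [Real.sqrt_le_left (by positivity)]
            nlinarith [(Nat.cast_nonneg k : (0:ℝ) ≤ k)]
    have hpb : (2:ℝ)^(-((J+1+k:ℕ):ℝ)*δ) = (2:ℝ)^(-(J:ℝ)*δ) * r^(k+1) := by
      have h1 : (r:ℝ)^(k+1) = (2:ℝ)^(-δ*((k:ℝ)+1)) := by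
        rw [hrdef, ← Real.rpow_natCast ((2:ℝ)^(-δ)) (k+1), ← Real.rpow_mul (by norm_num)]
        push_cast; ring_nf
      rw [h1, ← Real.rpow_add two_pos, hc]
      congr 1
      ring
    rw [hpb]
    calc Real.sqrt (1 + ((J+1+k:ℕ):ℝ)) * ((2:ℝ)^(-(J:ℝ)*δ) * r^(k+1))
        ≤ (Real.sqrt (1 + (J:ℝ)) * (2+(k:ℝ))) * ((2:ℝ)^(-(J:ℝ)*δ) * r^(k+1)) := by
          apply mul_le_mul_of_nonneg_right hsqb
          positivity
      _ = Real.sqrt (1 + (J:ℝ)) * (2:ℝ)^(-(J:ℝ)*δ) * ((1+((k+1:ℕ):ℝ)) * r^(k+1)) := by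
          push_cast; ring
  calc ∑ j ∈ Finset.Ico (J+1) (J+Q+1), Real.sqrt (1 + (j:ℝ)) * (2:ℝ)^(-(j:ℝ)*δ)
      = ∑ k ∈ Finset.range Q, Real.sqrt (1 + ((J+1+k:ℕ):ℝ)) * (2:ℝ)^(-((J+1+k:ℕ):ℝ)*δ) := by
        rw [Finset.sum_Ico_eq_sum_range]
        have hq : J+Q+1-(J+1) = Q := by omega
        rw [hq]
    _ ≤ ∑ k ∈ Finset.range Q, Real.sqrt (1 + (J:ℝ)) * (2:ℝ)^(-(J:ℝ)*δ) * ((1+((k+1:ℕ):ℝ)) * r^(k+1)) :=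
        Finset.sum_le_sum (fun k _ => hterm k)
    _ = Real.sqrt (1 + (J:ℝ)) * (2:ℝ)^(-(J:ℝ)*δ) *
        ∑ k ∈ Finset.range Q, (1+((k+1:ℕ):ℝ)) * r^(k+1) := by
        rw [Finset.mul_sum]
    _ ≤ Real.sqrt (1 + (J:ℝ)) * (2:ℝ)^(-(J:ℝ)*δ) * ((1-r)⁻¹ + r/(1-r)^2) := by
        apply mul_le_mul_of_nonneg_left _ (mul_nonneg hsq0 hp0)
        have hshift : ∑ k ∈ Finset.range Q, (1+((k+1:ℕ):ℝ)) * r^(k+1) ≤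
            ∑ m ∈ Finset.range (Q+1), (1+(m:ℝ)) * r^m := by
          rw [Finset.sum_range_succ']
          have : (0:ℝ) ≤ (1+((0:ℕ):ℝ)) * r^0 := hf0 0
          push_cast
          push_cast at this
          linarith
        calc ∑ k ∈ Finset.range Q, (1+((k+1:ℕ):ℝ)) * r^(k+1)
            ≤ ∑ m ∈ Finset.range (Q+1), (1+(m:ℝ)) * r^m := hshift
          _ ≤ ∑' m : ℕ, (1+(m:ℝ)) * r^m := hf.summable.sum_le_tsum _ (fun m _ => hf0 m)
          _ = (1-r)⁻¹ + r/(1-r)^2 := hf.tsum_eq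
    _ = ((1 - r)⁻¹ + r/(1-r)^2) * (Real.sqrt (1 + (J:ℝ)) * (2:ℝ)^(-(J:ℝ)*δ)) := by ring

lemma diff_eq (g : ℝ → ℝ) (lam00 : ℝ) (lam : ℕ → ℕ → ℝ) (J Q : ℕ) (t : ℝ) :
    haarPartialSum g lam00 lam (J+Q) t - haarPartialSum g lam00 lam J t =
      ∑ j ∈ Finset.Ico (J+1) (J+Q+1), ∑ k ∈ Finset.range (2^j),
        lam j k * ∫ s in (0:ℝ)..t, g s * haarPsi j k s := by
  unfold haarPartialSum
  rw [Finset.sum_Ico_eq_sub _ (by omega : J+1 ≤ J+Q+1)]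
  have : J + Q + 1 = J + 1 + Q := by omega
  rw [this]
  ring

lemma master_bound
    (hcont : ContinuousOn g (Icc 0 1))
    (hgb : ∀ s ∈ Set.Icc (0 : ℝ) 1, |g s| ≤ M)
    (hg : ∀ s₁ ∈ Set.Icc (0 : ℝ) 1, ∀ s₂ ∈ Set.Icc (0 : ℝ) 1,
      |g s₁ - g s₂| ≤ Cg * |s₁ - s₂| ^ α)
    (hM : 0 ≤ M) (hCg : 0 ≤ Cg) (hCstar : 0 ≤ Cstar)
    (hγ0 : 0 ≤ γ) (hγ : γ < 1/2) (hα0 : 1/2 < α) (hα1 : α ≤ 1)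
    (lam00 : ℝ) (lam : ℕ → ℕ → ℝ)
    (hlam : ∀ j k : ℕ, k < 2 ^ j → |lam j k| ≤ Cstar * Real.sqrt (1 + (j : ℝ)))
    (J Q : ℕ) {t₁ t₂ : ℝ} (ht1 : 0 ≤ t₁) (h12 : t₁ < t₂) (ht2 : t₂ ≤ 1) :
    |(haarPartialSum g lam00 lam (J+Q) t₂ - haarPartialSum g lam00 lam J t₂) -
     (haarPartialSum g lam00 lam (J+Q) t₁ - haarPartialSum g lam00 lam J t₁)| ≤
      Cstar * (2*M+3*Cg) * tailK (min (1/2 - γ) (α - 1/2)) *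
        (Real.sqrt (1+(J:ℝ)) * 2^(-(J:ℝ)* min (1/2 - γ) (α - 1/2))) * (t₂-t₁)^γ := by
  set δ := min (1/2 - γ) (α - 1/2) with hδdef
  have hδ0 : 0 < δ := lt_min (by linarith) (by linarith)
  have h1m : t₁ ∈ Icc (0:ℝ) 1 := ⟨ht1, by linarith⟩
  have h2m : t₂ ∈ Icc (0:ℝ) 1 := ⟨by linarith, ht2⟩
  have h0m : (0:ℝ) ∈ Icc (0:ℝ) 1 := ⟨le_refl _, by norm_num⟩
  have hΔγ0 : (0:ℝ) ≤ (t₂ - t₁)^γ := Real.rpow_nonneg (by linarith) _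
  have hsub : ∀ j k : ℕ,
      (∫ s in (0:ℝ)..t₂, g s * haarPsi j k s) - (∫ s in (0:ℝ)..t₁, g s * haarPsi j k s) =
        ∫ s in t₁..t₂, g s * haarPsi j k s := fun j k =>
    intervalIntegral.integral_interval_sub_left
      (gpsi_intervalIntegrable hcont hgb j k h0m h2m)
      (gpsi_intervalIntegrable hcont hgb j k h0m h1m)
  have hdd : (haarPartialSum g lam00 lam (J+Q) t₂ - haarPartialSum g lam00 lam J t₂) -
      (haarPartialSum g lam00 lam (J+Q) t₁ - haarPartialSum g lam00 lam J t₁) =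
      ∑ j ∈ Finset.Ico (J+1) (J+Q+1), ∑ k ∈ Finset.range (2^j),
        lam j k * ∫ s in t₁..t₂, g s * haarPsi j k s := by
    rw [diff_eq g lam00 lam J Q t₂, diff_eq g lam00 lam J Q t₁, ← Finset.sum_sub_distrib]
    apply Finset.sum_congr rfl
    intro j _
    rw [← Finset.sum_sub_distrib]
    apply Finset.sum_congr rfl
    intro k _
    rw [← mul_sub, hsub j k]
  rw [hdd]
  calc |∑ j ∈ Finset.Ico (J+1) (J+Q+1), ∑ k ∈ Finset.range (2^j),
        lam j k * ∫ s in t₁..t₂, g s * haarPsi j k s|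
      ≤ ∑ j ∈ Finset.Ico (J+1) (J+Q+1), |∑ k ∈ Finset.range (2^j),
        lam j k * ∫ s in t₁..t₂, g s * haarPsi j k s| := Finset.abs_sum_le_sum_abs _ _
    _ ≤ ∑ j ∈ Finset.Ico (J+1) (J+Q+1),
          Cstar * (2*M+3*Cg) * (t₂-t₁)^γ * (Real.sqrt (1+(j:ℝ)) * 2^(-(j:ℝ)*δ)) := by
        apply Finset.sum_le_sum
        intro j _
        calc |∑ k ∈ Finset.range (2^j), lam j k * ∫ s in t₁..t₂, g s * haarPsi j k s|
            ≤ ∑ k ∈ Finset.range (2^j), |lam j k * ∫ s in t₁..t₂, g s * haarPsi j k s| :=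
              Finset.abs_sum_le_sum_abs _ _
          _ ≤ ∑ k ∈ Finset.range (2^j),
              Cstar * Real.sqrt (1+(j:ℝ)) * |∫ s in t₁..t₂, g s * haarPsi j k s| := by
              apply Finset.sum_le_sum
              intro k hk
              rw [abs_mul]
              exact mul_le_mul_of_nonneg_right (hlam j k (Finset.mem_range.1 hk)) (abs_nonneg _)
          _ = Cstar * Real.sqrt (1+(j:ℝ)) *
              ∑ k ∈ Finset.range (2^j), |∫ s in t₁..t₂, g s * haarPsi j k s| := by
              rw [Finset.mul_sum]
          _ ≤ Cstar * Real.sqrt (1+(j:ℝ)) *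
              ((2*M + 3*Cg) * 2 ^ (-(j:ℝ) * δ) * (t₂ - t₁) ^ γ) := by
              apply mul_le_mul_of_nonneg_left
                (level_sum_bound hcont hgb hg hM hCg hγ0 hγ hα0 hα1 j ht1 h12 ht2)
                (mul_nonneg hCstar (Real.sqrt_nonneg _))
          _ = Cstar * (2*M+3*Cg) * (t₂-t₁)^γ * (Real.sqrt (1+(j:ℝ)) * 2^(-(j:ℝ)*δ)) := by
              ring
    _ = Cstar * (2*M+3*Cg) * (t₂-t₁)^γ *
          ∑ j ∈ Finset.Ico (J+1) (J+Q+1), Real.sqrt (1+(j:ℝ)) * 2^(-(j:ℝ)*δ) := by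
        rw [Finset.mul_sum]
    _ ≤ Cstar * (2*M+3*Cg) * (t₂-t₁)^γ *
          (tailK δ * (Real.sqrt (1+(J:ℝ)) * 2^(-(J:ℝ)*δ))) := by
        apply mul_le_mul_of_nonneg_left (tail_sum_bound hδ0 J Q)
        exact mul_nonneg (mul_nonneg hCstar (by linarith)) hΔγ0
    _ = Cstar * (2*M+3*Cg) * tailK δ * (Real.sqrt (1+(J:ℝ)) * 2^(-(J:ℝ)*δ)) * (t₂-t₁)^γ := by
        ring

end haarAux2

/-- Cauchy-type estimate for the Haar partial sums: under the stated bounds on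
`g` and the coefficients `λ`, there is a constant `D > 0` (depending only on `M, C_g, C*, γ, α`)
with `‖S_{J+Q} − S_J‖_{C^γ} ≤ D 2^{−J min(1/2−γ, α−1/2)} √(1+J)` for all `J` and `Q ≥ 1`. -/
theorem statement12 (γ : ℝ) (hγ0 : 0 ≤ γ) (hγ : γ < 1 / 2)
    (α : ℝ) (hα0 : 1 / 2 < α) (hα1 : α ≤ 1)
    (M Cg Cstar : ℝ) (hM : 0 ≤ M) (hCg : 0 ≤ Cg) (hCstar : 0 ≤ Cstar)
    (g : ℝ → ℝ) (hgb : ∀ s ∈ Set.Icc (0 : ℝ) 1, |g s| ≤ M)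
    (hg : ∀ s₁ ∈ Set.Icc (0 : ℝ) 1, ∀ s₂ ∈ Set.Icc (0 : ℝ) 1,
      |g s₁ - g s₂| ≤ Cg * |s₁ - s₂| ^ α)
    (lam00 : ℝ) (hlam00 : |lam00| ≤ Cstar)
    (lam : ℕ → ℕ → ℝ)
    (hlam : ∀ j k : ℕ, k < 2 ^ j → |lam j k| ≤ Cstar * Real.sqrt (1 + (j : ℝ))) :
    ∃ D : ℝ, 0 < D ∧
      ∀ J Q : ℕ, 1 ≤ Q →
        holderNorm γ
            (fun t => haarPartialSum g lam00 lam (J + Q) t -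
              haarPartialSum g lam00 lam J t) ≤
          D * 2 ^ (-(J : ℝ) * min (1 / 2 - γ) (α - 1 / 2)) *
            Real.sqrt (1 + (J : ℝ)) := by
  have hcont : ContinuousOn g (Icc 0 1) := holder_continuousOn (by linarith) hg
  set δ := min (1/2 - γ) (α - 1/2) with hδdef
  have hδ0 : 0 < δ := lt_min (by linarith) (by linarith)
  have hK0 : 0 < tailK δ := by
    unfold tailK
    have hr0 : 0 < (2:ℝ)^(-δ) := Real.rpow_pos_of_pos two_pos _
    have hr1 : (2:ℝ)^(-δ) < 1 :=
      Real.rpow_lt_one_of_one_lt_of_neg (by norm_num) (by linarith)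
    have h1r : 0 < 1 - (2:ℝ)^(-δ) := by linarith
    positivity
  set C' := Cstar * (2*M+3*Cg) * tailK δ with hC'def
  have hC'0 : 0 ≤ C' :=
    mul_nonneg (mul_nonneg hCstar (by linarith)) (le_of_lt hK0)
  refine ⟨2*C' + 1, by linarith, ?_⟩
  intro J Q _
  set X := Real.sqrt (1+(J:ℝ)) * (2:ℝ)^(-(J:ℝ)*δ) with hXdef
  have hX0 : 0 ≤ X := mul_nonneg (Real.sqrt_nonneg _) (Real.rpow_nonneg (by norm_num) _)
  set B := C' * X with hBdef
  have hB0 : 0 ≤ B := mul_nonneg hC'0 hX0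
  have hmaster : ∀ t₁ t₂ : ℝ, 0 ≤ t₁ → t₁ < t₂ → t₂ ≤ 1 →
      |(haarPartialSum g lam00 lam (J+Q) t₂ - haarPartialSum g lam00 lam J t₂) -
       (haarPartialSum g lam00 lam (J+Q) t₁ - haarPartialSum g lam00 lam J t₁)| ≤
        B * (t₂-t₁)^γ := by
    intro t₁ t₂ h1 h2 h3
    have := master_bound hcont hgb hg hM hCg hCstar hγ0 hγ hα0 hα1 lam00 lam hlam
      J Q h1 h2 h3
    calc |(haarPartialSum g lam00 lam (J+Q) t₂ - haarPartialSum g lam00 lam J t₂) -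
       (haarPartialSum g lam00 lam (J+Q) t₁ - haarPartialSum g lam00 lam J t₁)|
        ≤ Cstar * (2*M+3*Cg) * tailK δ * (Real.sqrt (1+(J:ℝ)) * 2^(-(J:ℝ)*δ)) * (t₂-t₁)^γ :=
          this
      _ = B * (t₂-t₁)^γ := by rw [hBdef, hC'def, hXdef]
  have hu0 : haarPartialSum g lam00 lam (J+Q) 0 - haarPartialSum g lam00 lam J 0 = 0 := by
    simp [haarPartialSum, intervalIntegral.integral_same]
  have hsup1 : sSup ((fun t => |haarPartialSum g lam00 lam (J+Q) t -
      haarPartialSum g lam00 lam J t|) '' Icc (0:ℝ) 1) ≤ B := by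
    apply Real.sSup_le _ hB0
    rintro x ⟨t, ht, rfl⟩
    show |haarPartialSum g lam00 lam (J+Q) t - haarPartialSum g lam00 lam J t| ≤ B
    rcases eq_or_lt_of_le ht.1 with h0 | h0
    · rw [← h0, hu0, abs_zero]; exact hB0
    · have := hmaster 0 t (le_refl _) h0 ht.2
      rw [hu0, sub_zero] at this
      calc |haarPartialSum g lam00 lam (J+Q) t - haarPartialSum g lam00 lam J t|
          ≤ B * (t - 0)^γ := this
        _ ≤ B * 1 := by
            apply mul_le_mul_of_nonneg_left _ hB0
            rw [sub_zero]
            exact Real.rpow_le_one (le_of_lt h0) ht.2 hγ0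
        _ = B := mul_one B
  have hsup2 : sSup {q : ℝ | ∃ t₁ t₂ : ℝ, 0 ≤ t₁ ∧ t₁ < t₂ ∧ t₂ ≤ 1 ∧
      q = |(haarPartialSum g lam00 lam (J+Q) t₁ - haarPartialSum g lam00 lam J t₁) -
        (haarPartialSum g lam00 lam (J+Q) t₂ - haarPartialSum g lam00 lam J t₂)| /
          (t₂ - t₁) ^ γ} ≤ B := by
    apply Real.sSup_le _ hB0
    rintro x ⟨t₁, t₂, h1, h2, h3, rfl⟩
    have hpos : (0:ℝ) < (t₂ - t₁)^γ := Real.rpow_pos_of_pos (by linarith) γ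
    rw [div_le_iff₀ hpos, abs_sub_comm]
    exact hmaster t₁ t₂ h1 h2 h3
  calc holderNorm γ (fun t => haarPartialSum g lam00 lam (J + Q) t -
        haarPartialSum g lam00 lam J t) ≤ B + B := add_le_add hsup1 hsup2
    _ = 2 * C' * ((2:ℝ)^(-(J:ℝ)*δ) * Real.sqrt (1+(J:ℝ))) := by rw [hBdef, hXdef]; ring
    _ ≤ (2*C' + 1) * ((2:ℝ)^(-(J:ℝ)*δ) * Real.sqrt (1+(J:ℝ))) := by
        apply mul_le_mul_of_nonneg_right (by linarith)
        rw [hXdef] at hX0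
        nlinarith [hX0]
    _ = (2*C' + 1) * 2 ^ (-(J : ℝ) * δ) * Real.sqrt (1 + (J : ℝ)) := by ring
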